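/- In the overlap graph, the merge of s and t (the string pref(s,t)·ov(s,t)·suff(s,t)) is the shortest string having s as a prefix and t as a suffix, provided neither of s, t is a substring of the other. -/

import Mathlib

/-- The length of the overlap of `s` and `t`: the longest `y` such that
`s = x ++ y` and `t = y ++ z` with `x, z` non-empty. -/
def ovLen {α : Type*} [DecidableEq α] (s t : List α) : ℕ :=
  Nat.findGreatest
    (fun k => k < s.length ∧ k < t.length ∧ s.drop (s.length - k) = t.take k)
    (min s.length t.length)

/-- The overlap of `s` and `t`. -/
def ov {α : Type*} [DecidableEq α] (s t : List α) : List α :=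
  t.take (ovLen s t)

/-- The prefix part of `s` with respect to `t`: `s = pre s t ++ ov s t`. -/
def pre {α : Type*} [DecidableEq α] (s t : List α) : List α :=
  s.take (s.length - ovLen s t)

/-- The suffix part of `t` with respect to `s`: `t = ov s t ++ suf s t`. -/
def suf {α : Type*} [DecidableEq α] (s t : List α) : List α :=
  t.drop (ovLen s t)

/-- The merge `pref(s,t)·ov(s,t)·suff(s,t)` is the shortest string having `s`
as a prefix and `t` as a suffix, provided neither is a substring of the other. -/
theorem stmt_16 {α : Type*} [DecidableEq α] (s t : List α)
    (hs : s ≠ []) (ht : t ≠ [])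
    (hst : ¬ s <:+: t) (hts : ¬ t <:+: s) :
    s <+: (pre s t ++ ov s t ++ suf s t) ∧
    t <:+ (pre s t ++ ov s t ++ suf s t) ∧
    ∀ m : List α, s <+: m → t <:+ m →
      (pre s t ++ ov s t ++ suf s t).length ≤ m.length := by
  have hs' : 0 < s.length := List.length_pos_iff_ne_nil.mpr hs
  have ht' : 0 < t.length := List.length_pos_iff_ne_nil.mpr ht
  set L := ovLen s t with hLdef
  have hP : L < s.length ∧ L < t.length ∧ s.drop (s.length - L) = t.take L :=
    Nat.findGreatest_spec (P := fun k =>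
        k < s.length ∧ k < t.length ∧ s.drop (s.length - k) = t.take k)
      (Nat.zero_le _) ⟨hs', ht', by simp⟩
  have hso : pre s t ++ ov s t = s := by
    rw [pre, ov, ← hLdef, ← hP.2.2, List.take_append_drop]
  have hot : ov s t ++ suf s t = t := List.take_append_drop _ _
  have hlen : (pre s t ++ ov s t ++ suf s t).length = s.length + (t.length - L) := by
    rw [hso]; simp [suf]; rfl
  refine ⟨?_, ?_, ?_⟩
  · rw [hso]; exact ⟨suf s t, rfl⟩
  · rw [List.append_assoc, hot]; exact ⟨pre s t, rfl⟩
  · intro m hm1 hm2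
    rw [hlen]
    have hsm : s.length ≤ m.length := hm1.length_le
    have htm : t.length ≤ m.length := hm2.length_le
    by_cases hbig : s.length + t.length ≤ m.length
    · omega
    · set k := s.length + t.length - m.length with hk
      have hks : k < s.length := by
        rcases Nat.lt_or_ge k s.length with h | h
        · exact h
        · exfalso
          have : m.length = t.length := by omega
          have : m = t := (hm2.eq_of_length this.symm).symm
          exact hst (this ▸ hm1.isInfix)
      have hkt : k < t.length := by
        rcases Nat.lt_or_ge k t.length with h | h
        · exact h
        · exfalso
          have : m.length = s.length := by omega
          have : m = s := (hm1.eq_of_length this.symm).symm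
          exact hts (this ▸ hm2.isInfix)
      have hseq : s = m.take s.length := List.prefix_iff_eq_take.mp hm1
      have hteq : t = m.drop (m.length - t.length) := List.suffix_iff_eq_drop.mp hm2
      have hPk : s.drop (s.length - k) = t.take k := by
        have h1 : s.length - (s.length - k) = k := by omega
        have h2 : s.length - k = m.length - t.length := by omega
        calc s.drop (s.length - k)
            = (m.take s.length).drop (s.length - k) := by rw [← hseq]
          _ = (m.drop (s.length - k)).take (s.length - (s.length - k)) :=
              List.drop_take ..
          _ = t.take k := by rw [h1, h2, ← hteq]
      have hkL : k ≤ L :=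
        Nat.le_findGreatest (by omega) ⟨hks, hkt, hPk⟩
      omega
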